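/- arXiv:2601.13787 — 4 statements merged into one kernel-verified Lean document; each statement's English description precedes it below -/
import Mathlib

section
/- Let g : [a,b] → [0,∞] be left-lower-semicontinuous, i.e., for every T ∈ (a,b], g(T) ≤ liminf_{t→T⁻} g(t). Suppose also that for each T ∈ [a,b) and each ε > 0 there exists t ∈ (T, min(T+ε, b)] with g(t) ≤ g(T). Then g(b) ≤ g(a). -/
open Filter Set

/-- Lemma 3.2 ("general-lemma"), endpoint inequality: a left-lower-semicontinuous
function `g : [a,b] → [0,∞]` such that to the right of each `T ∈ [a,b)` there are
points `t` arbitrarily close to `T` with `g t ≤ g T` satisfies `g b ≤ g a`. -/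
theorem stmt0 (a b : ℝ) (hab : a < b) (g : ℝ → ENNReal)
    (hlsc : ∀ T ∈ Set.Ioc a b, g T ≤ Filter.liminf g (nhdsWithin T (Set.Iio T)))
    (hstep : ∀ T ∈ Set.Ico a b, ∀ ε > 0,
      ∃ t ∈ Set.Ioc T (min (T + ε) b), g t ≤ g T) :
    g b ≤ g a := by
  set S : Set ℝ := {t | t ∈ Set.Icc a b ∧ g t ≤ g a} with hS
  have haS : a ∈ S := ⟨⟨le_refl a, hab.le⟩, le_refl _⟩
  have hSne : S.Nonempty := ⟨a, haS⟩
  have hSbd : BddAbove S := ⟨b, fun x hx => hx.1.2⟩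
  set T := sSup S with hT
  have haT : a ≤ T := le_csSup hSbd haS
  have hTb : T ≤ b := csSup_le hSne fun x hx => hx.1.2
  -- g T ≤ g a
  have hgT : g T ≤ g a := by
    by_cases hTS : T ∈ S
    · exact hTS.2
    · have haT2 : a < T := lt_of_le_of_ne haT (fun h => hTS (h ▸ haS))
      refine le_trans (hlsc T ⟨haT2, hTb⟩) ?_
      refine Filter.liminf_le_of_frequently_le' ?_
      rw [Filter.frequently_iff]
      intro U hU
      rcases mem_nhdsWithin.mp hU with ⟨V, hVopen, hTV, hVU⟩
      rcases Metric.isOpen_iff.mp hVopen T hTV with ⟨δ, hδ, hball⟩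
      obtain ⟨s, hsS, hs⟩ := exists_lt_of_lt_csSup hSne (by linarith : T - δ < T)
      have hsT : s < T := lt_of_le_of_ne (le_csSup hSbd hsS) (fun h => hTS (h ▸ hsS))
      refine ⟨s, hVU ⟨hball ?_, hsT⟩, hsS.2⟩
      rw [Metric.mem_ball, Real.dist_eq, abs_lt]
      constructor <;> linarith
  -- T = b
  have hTeq : T = b := by
    by_contra hne
    have hTb' : T < b := lt_of_le_of_ne hTb hne
    obtain ⟨t, ⟨ht1, ht2⟩, hgt⟩ := hstep T ⟨haT, hTb'⟩ 1 one_pos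
    have htS : t ∈ S := ⟨⟨le_trans haT ht1.le, le_trans ht2 (min_le_right _ _)⟩,
      le_trans hgt hgT⟩
    exact absurd (le_csSup hSbd htS) (not_le.mpr ht1)
  rw [← hTeq]; exact hgT
end

section
/- Let g : [a,b] → [0,∞] be left-lower-semicontinuous on [a,b], and suppose that for each T ∈ [a,b) there exist t > T arbitrarily close to T with g(t) ≤ g(T). Then g is a decreasing (antitone) function on [a,b]: for all s ≤ t in [a,b], g(t) ≤ g(s). -/
open Filter Set

/-- Lemma 3.2 ("general-lemma"): a left-lower-semicontinuous function
`g : [a,b] → [0,∞]` such that to the right of each `T ∈ [a,b)` there are points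
`t` arbitrarily close to `T` with `g t ≤ g T` is decreasing on `[a,b]`. -/
theorem stmt1 (a b : ℝ) (hab : a < b) (g : ℝ → ENNReal)
    (hlsc : ∀ T ∈ Set.Ioc a b, g T ≤ Filter.liminf g (nhdsWithin T (Set.Iio T)))
    (hstep : ∀ T ∈ Set.Ico a b, ∀ ε > 0,
      ∃ t ∈ Set.Ioc T (min (T + ε) b), g t ≤ g T) :
    ∀ s ∈ Set.Icc a b, ∀ t ∈ Set.Icc a b, s ≤ t → g t ≤ g s := by
  intro s hs t ht hst
  set A : Set ℝ := {u | u ∈ Set.Icc s t ∧ g u ≤ g s} with hA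
  have hsA : s ∈ A := ⟨⟨le_refl s, hst⟩, le_refl _⟩
  have hne : A.Nonempty := ⟨s, hsA⟩
  have hbdd : BddAbove A := ⟨t, fun u hu => hu.1.2⟩
  set c := sSup A with hc
  have hsc : s ≤ c := le_csSup hbdd hsA
  have hct : c ≤ t := csSup_le hne (fun u hu => hu.1.2)
  -- Step 1: g c ≤ g s
  have hgc : g c ≤ g s := by
    by_cases hcA : c ∈ A
    · exact hcA.2
    rcases eq_or_lt_of_le hsc with h | h
    · rw [← h]
    · -- c > s, use lsc
      have hcIoc : c ∈ Set.Ioc a b := ⟨lt_of_le_of_lt hs.1 h, le_trans hct ht.2⟩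
      refine le_trans (hlsc c hcIoc) ?_
      refine Filter.liminf_le_of_frequently_le ?_
      rw [(nhdsLT_basis_of_exists_lt ⟨s, h⟩).frequently_iff]
      intro l hl
      obtain ⟨u, huA, hlu⟩ := exists_lt_of_lt_csSup hne hl
      have huc : u < c := lt_of_le_of_ne (le_csSup hbdd huA)
        (fun he => hcA (he ▸ huA))
      exact ⟨u, ⟨hlu, huc⟩, huA.2⟩
  -- Step 2: c = t
  have hce : c = t := by
    by_contra hne'
    have hclt : c < t := lt_of_le_of_ne hct hne'
    have hcIco : c ∈ Set.Ico a b := ⟨le_trans hs.1 hsc, lt_of_lt_of_le hclt ht.2⟩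
    obtain ⟨u, hu, hgu⟩ := hstep c hcIco (t - c) (by linarith)
    have hub : u ≤ t := by
      have : min (c + (t - c)) b = t := by
        rw [show c + (t - c) = t by ring]
        exact min_eq_left ht.2
      rw [this] at hu
      exact hu.2
    have huA : u ∈ A := ⟨⟨le_trans hsc hu.1.le, hub⟩, le_trans hgu hgc⟩
    exact absurd (le_csSup hbdd huA) (not_le.mpr hu.1)
  rw [← hce]
  exact hgc
end

section
/- Let g : [a,b] → ℕ ∪ {∞} be lower semicontinuous. Let D ⊆ [a,b] be such that every T ∈ [a,b) is a limit from the right of points of D. Suppose that for every T ∈ [a,b], every positive integer n, and every sequence (t_i) in D with t_i > T, t_i → T, and g(t_i) ≥ n for all i, one has g(T) ≥ n. Then g is decreasing on [a,b]. -/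
open Filter Set

/-- Abstract content of Theorem 3.3 ("general-theorem"): if `g : [a,b] → ℕ ∪ {∞}` is
lower semicontinuous, `D` accumulates from the right at every `T ∈ [a,b)`, and lower
bounds `g ≥ n` along right sequences from `D` pass to the limit, then `g` is
decreasing on `[a,b]`. -/
theorem stmt4 (a b : ℝ) (hab : a < b) (g : ℝ → ℕ∞) (D : Set ℝ)
    (hD : D ⊆ Set.Icc a b)
    (hlsc : ∀ T ∈ Set.Icc a b,
      g T ≤ Filter.liminf g (nhdsWithin T (Set.Icc a b \ {T})))
    (hDacc : ∀ T ∈ Set.Ico a b, ∀ ε > 0, ∃ t ∈ D, T < t ∧ t < T + ε)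
    (hlim : ∀ T ∈ Set.Icc a b, ∀ n : ℕ, 0 < n → ∀ t : ℕ → ℝ,
      (∀ i, t i ∈ D) → (∀ i, T < t i) → Filter.Tendsto t Filter.atTop (nhds T) →
      (∀ i, (n : ℕ∞) ≤ g (t i)) → (n : ℕ∞) ≤ g T) :
    ∀ s ∈ Set.Icc a b, ∀ t ∈ Set.Icc a b, s ≤ t → g t ≤ g s := by
  intro s hs t ht hst
  -- Key claim: any positive natural lower bound of `g t` is a lower bound of `g s`.
  have key : ∀ n : ℕ, 0 < n → (n : ℕ∞) ≤ g t → (n : ℕ∞) ≤ g s := by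
    intro n hn hnt
    set B : Set ℝ := {r | r ∈ Set.Icc s t ∧ ∀ u ∈ Set.Icc r t, (n : ℕ∞) ≤ g u} with hB
    have htB : t ∈ B := by
      refine ⟨⟨hst, le_refl t⟩, ?_⟩
      intro u hu
      have : u = t := le_antisymm hu.2 hu.1
      simpa [this] using hnt
    have hBne : B.Nonempty := ⟨t, htB⟩
    have hBbd : BddBelow B := ⟨s, fun x hx => hx.1.1⟩
    set c : ℝ := sInf B with hc
    have hsc : s ≤ c := le_csInf hBne (fun x hx => hx.1.1)
    have hct : c ≤ t := csInf_le hBbd htB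
    -- everything strictly to the right of `c` (up to `t`) satisfies the bound
    have hstep1 : ∀ u, c < u → u ≤ t → (n : ℕ∞) ≤ g u := by
      intro u hcu hut
      obtain ⟨r, hrB, hru⟩ := exists_lt_of_csInf_lt hBne hcu
      exact hrB.2 u ⟨le_of_lt hru, hut⟩
    have hcab : c ∈ Set.Icc a b := ⟨le_trans hs.1 hsc, le_trans hct ht.2⟩
    -- `g c ≥ n` by the limit hypothesis along a right sequence from `D`
    have hcA : (n : ℕ∞) ≤ g c := by
      rcases eq_or_lt_of_le hct with hct' | hct'
      · simpa [hct'] using hnt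
      · have hcIco : c ∈ Set.Ico a b := ⟨hcab.1, lt_of_lt_of_le hct' ht.2⟩
        have hchoice : ∀ i : ℕ, ∃ u ∈ D, c < u ∧ u < c + min (t - c) (1 / (i + 1)) := by
          intro i
          refine hDacc c hcIco _ ?_
          exact lt_min (by linarith) (by positivity)
        choose u hu1 hu2 hu3 using hchoice
        have hub : ∀ i : ℕ, u i ≤ c + 1 / (i + 1 : ℝ) := fun i =>
          le_of_lt (lt_of_lt_of_le (hu3 i) (by gcongr; exact min_le_right _ _))
        have hlb : ∀ i : ℕ, c ≤ u i := fun i => le_of_lt (hu2 i)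
        have htend : Filter.Tendsto u Filter.atTop (nhds c) := by
          have h1 : Filter.Tendsto (fun i : ℕ => c + 1 / (i + 1 : ℝ)) Filter.atTop (nhds (c + 0)) :=
            tendsto_const_nhds.add tendsto_one_div_add_atTop_nhds_zero_nat
          rw [add_zero] at h1
          exact tendsto_of_tendsto_of_tendsto_of_le_of_le tendsto_const_nhds h1 hlb hub
        refine hlim c hcab n hn u hu1 hu2 htend ?_
        intro i
        have hut : u i ≤ t := by
          have := lt_of_lt_of_le (hu3 i) (by gcongr; exact min_le_left _ _ : c + min (t - c) (1/(i+1:ℝ)) ≤ c + (t - c))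
          linarith
        exact hstep1 (u i) (hu2 i) hut
    have hcB : c ∈ B := by
      refine ⟨⟨hsc, hct⟩, ?_⟩
      intro u hu
      rcases eq_or_lt_of_le hu.1 with h | h
      · simpa [← h] using hcA
      · exact hstep1 u h hu.2
    -- show `c = s` using lower semicontinuity
    by_cases hcs : c = s
    · simpa [hcs] using hcA
    have hsc' : s < c := lt_of_le_of_ne hsc (Ne.symm hcs)
    exfalso
    have hliminf : (n : ℕ∞) ≤ Filter.liminf g (nhdsWithin c (Set.Icc a b \ {c})) :=
      le_trans hcA (hlsc c hcab)
    have hlt : ((n - 1 : ℕ) : ℕ∞) < Filter.liminf g (nhdsWithin c (Set.Icc a b \ {c})) := by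
      refine lt_of_lt_of_le ?_ hliminf
      exact_mod_cast Nat.sub_lt hn Nat.one_pos
    have hev : ∀ᶠ x in nhdsWithin c (Set.Icc a b \ {c}), ((n - 1 : ℕ) : ℕ∞) < g x :=
      Filter.eventually_lt_of_lt_liminf hlt
    have hev' : ∀ᶠ x in nhdsWithin c (Set.Icc a b \ {c}), (n : ℕ∞) ≤ g x := by
      filter_upwards [hev] with x hx
      have : ((n - 1 : ℕ) : ℕ∞) + 1 ≤ g x := Order.add_one_le_of_lt hx
      have hcast : ((n - 1 : ℕ) : ℕ∞) + 1 = (n : ℕ∞) := by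
        norm_cast
        omega
      rwa [hcast] at this
    rw [Filter.Eventually, Metric.mem_nhdsWithin_iff] at hev'
    obtain ⟨δ, hδ, hball⟩ := hev'
    set r : ℝ := max s (c - δ / 2) with hr
    have hrc : r < c := max_lt hsc' (by linarith)
    have hrB : r ∈ B := by
      refine ⟨⟨le_max_left _ _, le_trans (le_of_lt hrc) hct⟩, ?_⟩
      intro u hu
      rcases le_or_gt c u with h | h
      · rcases eq_or_lt_of_le h with h' | h'
        · simpa [← h'] using hcA
        · exact hstep1 u h' hu.2
      · have hsr : s ≤ r := le_max_left _ _
        have hcr : c - δ / 2 ≤ r := le_max_right _ _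
        have huab : u ∈ Set.Icc a b :=
          ⟨le_trans hs.1 (le_trans hsr hu.1), le_trans (le_of_lt (lt_of_lt_of_le h hct)) ht.2⟩
        have huball : u ∈ Metric.ball c δ := by
          rw [Metric.mem_ball, Real.dist_eq, abs_sub_lt_iff]
          constructor
          · linarith
          · have : c - δ / 2 ≤ u := le_trans hcr hu.1
            linarith
        exact hball ⟨huball, huab, fun h' => absurd (Set.mem_singleton_iff.mp h') (ne_of_lt h)⟩
    exact absurd (csInf_le hBbd hrB) (not_le.mpr hrc)
  -- conclude `g t ≤ g s`
  refine le_of_forall_lt ?_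
  intro x hx
  have hxne : x ≠ ⊤ := ne_top_of_lt hx
  lift x to ℕ using hxne with m
  have h1 : ((m + 1 : ℕ) : ℕ∞) ≤ g t := by
    have := Order.add_one_le_of_lt hx
    exact_mod_cast this
  have h2 : ((m + 1 : ℕ) : ℕ∞) ≤ g s := key (m + 1) (Nat.succ_pos m) h1
  exact lt_of_lt_of_le (by exact_mod_cast Nat.lt_succ_self m) h2
end

section
/- Let γ : ℝ → ℝ³ be a continuous proper map (preimages of compact sets are compact) with γ(0) = q. Then for every R > |q|, the length of γ restricted to the connected component of γ⁻¹(closed ball B̄(0,R)) containing 0 is at least 2(R − |q|). -/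
open Set Metric

/-- Quantitative core of Lemma 6.2 ("bowl-lemma"): a continuous proper curve
`γ : ℝ → ℝ³` with `γ 0 = q` has length at least `2(R - |q|)` on the connected
component of `γ⁻¹(B̄(0,R))` containing `0`, for every `R > |q|`. -/
theorem stmt5 (γ : ℝ → EuclideanSpace ℝ (Fin 3)) (q : EuclideanSpace ℝ (Fin 3))
    (hcont : Continuous γ) (hproper : IsProperMap γ) (h0 : γ 0 = q)
    (R : ℝ) (hR : ‖q‖ < R) :
    ENNReal.ofReal (2 * (R - ‖q‖)) ≤
      eVariationOn γ (connectedComponentIn (γ ⁻¹' Metric.closedBall 0 R) 0) := by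
  set K : Set ℝ := γ ⁻¹' Metric.closedBall 0 R with hK
  have hKcompact : IsCompact K := hproper.isCompact_preimage (isCompact_closedBall 0 R)
  have h0K : (0 : ℝ) ∈ K := by
    simp only [hK, mem_preimage, mem_closedBall, dist_zero_right, h0]
    exact hR.le
  set A : Set ℝ := connectedComponentIn K 0 with hA
  have hAconn : IsConnected A := isConnected_connectedComponentIn_iff.mpr h0K
  have hAsub : A ⊆ K := connectedComponentIn_subset K 0
  have h0A : (0 : ℝ) ∈ A := mem_connectedComponentIn h0K
  have hAcompact : IsCompact A := by
    rw [hA, connectedComponentIn_eq_image h0K]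
    haveI : CompactSpace K := isCompact_iff_compactSpace.mp hKcompact
    exact (isClosed_connectedComponent.isCompact).image continuous_subtype_val
  have hIcc := eq_Icc_of_connected_compact hAconn hAcompact
  set s₁ := sInf A with hs₁def
  set s₂ := sSup A with hs₂def
  have h0mem : (0 : ℝ) ∈ Icc s₁ s₂ := hIcc ▸ h0A
  have hs₁0 : s₁ ≤ 0 := h0mem.1
  have hs₂0 : 0 ≤ s₂ := h0mem.2
  have hs₁A : s₁ ∈ A := hIcc ▸ left_mem_Icc.mpr (hs₁0.trans hs₂0)
  have hs₂A : s₂ ∈ A := hIcc ▸ right_mem_Icc.mpr (hs₁0.trans hs₂0)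
  have hballK : γ ⁻¹' Metric.ball 0 R ⊆ K := preimage_mono Metric.ball_subset_closedBall
  -- the right endpoint hits the sphere
  have hnorm₂ : ‖γ s₂‖ = R := by
    have hle : ‖γ s₂‖ ≤ R := by
      have := hAsub hs₂A
      simpa [hK, mem_preimage, mem_closedBall, dist_zero_right] using this
    rcases lt_or_eq_of_le hle with hlt | heq
    · exfalso
      have hmem : s₂ ∈ γ ⁻¹' Metric.ball 0 R := by
        simpa [mem_preimage, mem_ball, dist_zero_right] using hlt
      obtain ⟨ε, hε, hball⟩ := Metric.mem_nhds_iff.mp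
        ((Metric.isOpen_ball.preimage hcont).mem_nhds hmem)
      have hsub2 : Icc s₂ (s₂ + ε / 2) ⊆ K := by
        intro x hx
        apply hballK
        apply hball
        rw [Metric.mem_ball, Real.dist_eq, abs_of_nonneg (by linarith [hx.1])]
        linarith [hx.2]
      have hS : Icc s₁ (s₂ + ε / 2) ⊆ K := by
        intro x hx
        rcases le_or_gt x s₂ with h | h
        · exact hAsub (hIcc ▸ ⟨hx.1, h⟩)
        · exact hsub2 ⟨h.le, hx.2⟩
      have hSA : Icc s₁ (s₂ + ε / 2) ⊆ A :=
        isPreconnected_Icc.subset_connectedComponentIn ⟨hs₁0, by linarith⟩ hS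
      have : s₂ + ε / 2 ∈ Icc s₁ s₂ := hIcc ▸ hSA (right_mem_Icc.mpr (by linarith))
      linarith [this.2]
    · exact heq
  -- the left endpoint hits the sphere
  have hnorm₁ : ‖γ s₁‖ = R := by
    have hle : ‖γ s₁‖ ≤ R := by
      have := hAsub hs₁A
      simpa [hK, mem_preimage, mem_closedBall, dist_zero_right] using this
    rcases lt_or_eq_of_le hle with hlt | heq
    · exfalso
      have hmem : s₁ ∈ γ ⁻¹' Metric.ball 0 R := by
        simpa [mem_preimage, mem_ball, dist_zero_right] using hlt
      obtain ⟨ε, hε, hball⟩ := Metric.mem_nhds_iff.mp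
        ((Metric.isOpen_ball.preimage hcont).mem_nhds hmem)
      have hsub2 : Icc (s₁ - ε / 2) s₁ ⊆ K := by
        intro x hx
        apply hballK
        apply hball
        rw [Metric.mem_ball, Real.dist_eq, abs_of_nonpos (by linarith [hx.2])]
        linarith [hx.1]
      have hS : Icc (s₁ - ε / 2) s₂ ⊆ K := by
        intro x hx
        rcases le_or_gt x s₁ with h | h
        · exact hsub2 ⟨hx.1, h⟩
        · exact hAsub (hIcc ▸ ⟨h.le, hx.2⟩)
      have hSA : Icc (s₁ - ε / 2) s₂ ⊆ A :=
        isPreconnected_Icc.subset_connectedComponentIn ⟨by linarith, hs₂0⟩ hS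
      have : s₁ - ε / 2 ∈ Icc s₁ s₂ := hIcc ▸ hSA (left_mem_Icc.mpr (by linarith))
      linarith [this.1]
    · exact heq
  -- lower bound on the variation
  have hsplit : eVariationOn γ (A ∩ Icc s₁ 0) + eVariationOn γ (A ∩ Icc 0 s₂)
      = eVariationOn γ (A ∩ Icc s₁ s₂) :=
    eVariationOn.Icc_add_Icc γ hs₁0 hs₂0 h0A
  have hinter : A ∩ Icc s₁ s₂ = A := by rw [hIcc]; exact inter_self _
  have h1 : ENNReal.ofReal (R - ‖q‖) ≤ eVariationOn γ (A ∩ Icc s₁ 0) := by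
    refine le_trans ?_ (eVariationOn.edist_le γ
      (x := s₁) (y := 0) ⟨hs₁A, left_mem_Icc.mpr hs₁0⟩ ⟨h0A, right_mem_Icc.mpr hs₁0⟩)
    rw [edist_dist, h0]
    apply ENNReal.ofReal_le_ofReal
    calc R - ‖q‖ = ‖γ s₁‖ - ‖q‖ := by rw [hnorm₁]
      _ ≤ ‖γ s₁ - q‖ := norm_sub_norm_le _ _
      _ = dist (γ s₁) q := (dist_eq_norm _ _).symm
  have h2 : ENNReal.ofReal (R - ‖q‖) ≤ eVariationOn γ (A ∩ Icc 0 s₂) := by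
    refine le_trans ?_ (eVariationOn.edist_le γ
      (x := 0) (y := s₂) ⟨h0A, left_mem_Icc.mpr hs₂0⟩ ⟨hs₂A, right_mem_Icc.mpr hs₂0⟩)
    rw [edist_dist, h0]
    apply ENNReal.ofReal_le_ofReal
    calc R - ‖q‖ = ‖γ s₂‖ - ‖q‖ := by rw [hnorm₂]
      _ ≤ ‖γ s₂ - q‖ := norm_sub_norm_le _ _
      _ = dist q (γ s₂) := by rw [dist_eq_norm, norm_sub_rev]
  calc ENNReal.ofReal (2 * (R - ‖q‖))
      ≤ ENNReal.ofReal (R - ‖q‖) + ENNReal.ofReal (R - ‖q‖) := by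
        rw [← ENNReal.ofReal_add (by linarith) (by linarith)]; ring_nf; exact le_refl _
    _ ≤ eVariationOn γ (A ∩ Icc s₁ 0) + eVariationOn γ (A ∩ Icc 0 s₂) := add_le_add h1 h2
    _ = eVariationOn γ (A ∩ Icc s₁ s₂) := hsplit
    _ = eVariationOn γ A := by rw [hinter]
end
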